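/- Harnack's inequality: if u is a positive harmonic function on the open disc B(a, d) in ℝ², then for 0 ≤ r < 1 and any point z on the circle |z - a| = rd, u satisfies u(a)·(1-r)/(1+r) ≤ u(z) ≤ u(a)·(1+r)/(1-r). -/

import Mathlib

open Complex Metric Set intervalIntegral
open scoped Topology Interval

/-- `u` is harmonic on the open set `V ⊆ ℂ`: it is `C²` and its Laplacian
(the sum of the second derivatives in the directions `1` and `i`) vanishes. -/
def IsHarmonicOn (u : ℂ → ℝ) (V : Set ℂ) : Prop :=
  ∀ z ∈ V, ContDiffAt ℝ 2 u z ∧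
    iteratedFDeriv ℝ 2 u z ![1, 1] + iteratedFDeriv ℝ 2 u z ![Complex.I, Complex.I] = 0

lemma mem_ball_rect {a : ℂ} {d : ℝ} (hd : 0 < d) {s t X Y : ℝ}
    (hX : |s - a.re| ≤ X) (hY : |t - a.im| ≤ Y) (hXY : X ^ 2 + Y ^ 2 < d ^ 2) :
    (s + t * I : ℂ) ∈ ball a d := by
  rw [mem_ball, Complex.dist_eq_re_im]
  have hs : ((s : ℂ) + (t : ℂ) * I).re = s := by simp
  have ht : ((s : ℂ) + (t : ℂ) * I).im = t := by simp
  rw [hs, ht, Real.sqrt_lt' hd]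
  nlinarith [abs_nonneg (s - a.re), abs_nonneg (t - a.im), _root_.sq_abs (s - a.re),
    _root_.sq_abs (t - a.im), sq_nonneg X, sq_nonneg Y]

lemma dist_sq_eq (q a : ℂ) : dist q a ^ 2 = (q.re - a.re) ^ 2 + (q.im - a.im) ^ 2 := by
  rw [Complex.dist_eq_re_im, Real.sq_sqrt (by positivity)]

lemma exists_primitive {h : ℂ → ℂ} {a : ℂ} {d : ℝ} (hd : 0 < d)
    (hh : DifferentiableOn ℂ h (ball a d)) :
    ∃ F : ℂ → ℂ, ∀ w ∈ ball a d, HasDerivAt F (h w) w := by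
  have hcont : ContinuousOn h (ball a d) := hh.continuousOn
  -- membership of anchored rectangles
  have memA : ∀ q ∈ ball a d, ∀ s ∈ [[a.re, q.re]], ∀ t ∈ [[a.im, q.im]],
      ((s : ℂ) + (t : ℂ) * I) ∈ ball a d := by
    intro q hq s hs t ht
    refine mem_ball_rect hd (abs_sub_left_of_mem_uIcc hs) (abs_sub_left_of_mem_uIcc ht) ?_
    have h1 := dist_sq_eq q a
    have h2 : dist q a < d := mem_ball.1 hq
    have h3 : (0:ℝ) ≤ dist q a := dist_nonneg
    nlinarith [_root_.sq_abs (q.re - a.re), _root_.sq_abs (q.im - a.im)]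
  refine ⟨fun w => (∫ t in a.re..w.re, h (t + a.im * I)) +
      I • ∫ t in a.im..w.im, h (w.re + t * I), fun w hw => ?_⟩
  set F : ℂ → ℂ := fun w => (∫ t in a.re..w.re, h (t + a.im * I)) +
      I • ∫ t in a.im..w.im, h (w.re + t * I) with hF
  set ε : ℝ := (d - dist w a) / 3 with hεdef
  have hwd : dist w a < d := mem_ball.1 hw
  have hε : 0 < ε := by simp only [hεdef]; linarith
  -- membership of the thin region near w
  have memB : ∀ s t : ℝ, |s - w.re| ≤ ε → |t - a.im| ≤ |w.im - a.im| + ε →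
      ((s : ℂ) + (t : ℂ) * I) ∈ ball a d := by
    intro s t hs ht
    refine mem_ball_rect hd (X := |w.re - a.re| + ε) (Y := |w.im - a.im| + ε) ?_ ht ?_
    · have := abs_sub_le s w.re a.re
      linarith
    · have h1 := dist_sq_eq w a
      have h3 : (0:ℝ) ≤ dist w a := dist_nonneg
      have hre : |w.re - a.re| ≤ dist w a := by
        nlinarith [_root_.sq_abs (w.re - a.re), _root_.sq_abs (w.im - a.im), abs_nonneg (w.re - a.re),
          sq_nonneg (w.im - a.im), abs_nonneg (w.im - a.im)]
      have him : |w.im - a.im| ≤ dist w a := by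
        nlinarith [_root_.sq_abs (w.re - a.re), _root_.sq_abs (w.im - a.im), abs_nonneg (w.im - a.im),
          sq_nonneg (w.re - a.re)]
      have hdd : dist w a + 3 * ε = d := by simp only [hεdef]; ring
      nlinarith [abs_nonneg (w.re - a.re), abs_nonneg (w.im - a.im),
        _root_.sq_abs (w.re - a.re), _root_.sq_abs (w.im - a.im)]
  -- integrability helpers
  have intH : ∀ (c b₁ b₂ : ℝ), (∀ t ∈ [[b₁, b₂]], ((t : ℂ) + (c : ℂ) * I) ∈ ball a d) →
      IntervalIntegrable (fun t : ℝ => h ((t : ℂ) + (c : ℂ) * I)) MeasureTheory.volume b₁ b₂ := by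
    intro c b₁ b₂ hmem
    apply ContinuousOn.intervalIntegrable
    exact hcont.comp ((continuous_ofReal.add continuous_const).continuousOn) hmem
  have intV : ∀ (c b₁ b₂ : ℝ), (∀ t ∈ [[b₁, b₂]], ((c : ℂ) + (t : ℂ) * I) ∈ ball a d) →
      IntervalIntegrable (fun t : ℝ => h ((c : ℂ) + (t : ℂ) * I)) MeasureTheory.volume b₁ b₂ := by
    intro c b₁ b₂ hmem
    apply ContinuousOn.intervalIntegrable
    exact hcont.comp ((continuous_const.add (continuous_ofReal.mul continuous_const)).continuousOn) hmem
  -- key identity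
  have key : ∀ w' ∈ ball w ε, F w' - F w =
      (∫ t in w.re..w'.re, h (t + w'.im * I)) + I • ∫ t in w.im..w'.im, h (w.re + t * I) := by
    intro w' hw'
    have hw'w : dist w' w < ε := mem_ball.1 hw'
    have habs : ‖w' - w‖ < ε := by rwa [← Complex.dist_eq]
    have hre' : |w'.re - w.re| ≤ ε := le_of_lt (lt_of_le_of_lt (by
      simpa using Complex.abs_re_le_norm (w' - w)) habs)
    have him' : |w'.im - w.im| ≤ ε := le_of_lt (lt_of_le_of_lt (by
      simpa using Complex.abs_im_le_norm (w' - w)) habs)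
    have hw'ball : w' ∈ ball a d := by
      rw [mem_ball] at hw' ⊢
      calc dist w' a ≤ dist w' w + dist w a := dist_triangle _ _ _
        _ < ε + dist w a := by linarith
        _ ≤ d := by simp only [hεdef]; linarith
    -- memB-based membership for various segments
    have memTop : ∀ s ∈ [[w.re, w'.re]], ∀ t ∈ [[a.im, w'.im]],
        ((s : ℂ) + (t : ℂ) * I) ∈ ball a d := by
      intro s hs t ht
      refine memB s t ?_ ?_
      · have := abs_sub_left_of_mem_uIcc hs; linarith
      · have h1 := abs_sub_left_of_mem_uIcc ht
        have h2 := abs_sub_le w'.im w.im a.im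
        have h3 := abs_sub_le t a.im a.im
        calc |t - a.im| ≤ |w'.im - a.im| := h1
          _ ≤ |w'.im - w.im| + |w.im - a.im| := abs_sub_le _ _ _
          _ ≤ |w.im - a.im| + ε := by linarith
    have memV2 : ∀ t ∈ [[w.im, w'.im]], ((w.re : ℂ) + (t : ℂ) * I) ∈ ball a d := by
      intro t ht
      refine memB w.re t (by simp [hε.le]) ?_
      have h1 := abs_sub_left_of_mem_uIcc ht
      calc |t - a.im| ≤ |t - w.im| + |w.im - a.im| := abs_sub_le _ _ _
        _ ≤ |w.im - a.im| + ε := by linarith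
    -- integrabilities
    have i1 : IntervalIntegrable (fun t : ℝ => h ((t:ℂ) + (a.im:ℂ) * I)) MeasureTheory.volume a.re w.re :=
      intH _ _ _ (fun t ht => memA w hw t ht a.im (by simp))
    have i2 : IntervalIntegrable (fun t : ℝ => h ((t:ℂ) + (a.im:ℂ) * I)) MeasureTheory.volume w.re w'.re :=
      intH _ _ _ (fun t ht => memTop t ht a.im (by simp))
    have i3 : IntervalIntegrable (fun t : ℝ => h ((w.re:ℂ) + (t:ℂ) * I)) MeasureTheory.volume a.im w.im :=
      intV _ _ _ (fun t ht => memA w hw w.re (by simp) t ht)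
    have i4 : IntervalIntegrable (fun t : ℝ => h ((w.re:ℂ) + (t:ℂ) * I)) MeasureTheory.volume w.im w'.im :=
      intV _ _ _ memV2
    -- split the horizontal integral
    have split1 : (∫ t in a.re..w'.re, h ((t:ℂ) + (a.im:ℂ) * I)) =
        (∫ t in a.re..w.re, h ((t:ℂ) + (a.im:ℂ) * I)) + ∫ t in w.re..w'.re, h ((t:ℂ) + (a.im:ℂ) * I) :=
      (intervalIntegral.integral_add_adjacent_intervals i1 i2).symm
    have split2 : (∫ t in a.im..w'.im, h ((w.re:ℂ) + (t:ℂ) * I)) =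
        (∫ t in a.im..w.im, h ((w.re:ℂ) + (t:ℂ) * I)) + ∫ t in w.im..w'.im, h ((w.re:ℂ) + (t:ℂ) * I) :=
      (intervalIntegral.integral_add_adjacent_intervals i3 i4).symm
    -- Cauchy on the rectangle with corners (w.re, a.im) and w'
    have cauchy := Complex.integral_boundary_rect_eq_zero_of_differentiableOn h
      ((w.re : ℂ) + (a.im : ℂ) * I) w' (by
        apply hh.mono
        intro ζ hζ
        rw [Complex.mem_reProdIm] at hζ
        have := memTop ζ.re (by simpa using hζ.1) ζ.im (by simpa using hζ.2)
        simpa [Complex.re_add_im] using this)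
    simp only [Complex.add_re, Complex.ofReal_re, Complex.mul_re, Complex.I_re, Complex.I_im,
      Complex.ofReal_im, Complex.add_im, Complex.mul_im] at cauchy
    norm_num at cauchy
    -- now combine
    simp only [hF, smul_eq_mul] at *
    rw [split1]
    linear_combination cauchy + I * split2
  rw [hasDerivAt_iff_isLittleO, Asymptotics.isLittleO_iff]
  intro c hc0
  obtain ⟨δ, hδ0, hδ⟩ := Metric.continuousAt_iff.1
    (hcont.continuousAt (isOpen_ball.mem_nhds hw)) (c / 2) (by linarith)
  have hδ'0 : 0 < min (δ / 2) ε := lt_min (by linarith) hε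
  filter_upwards [Metric.ball_mem_nhds w hδ'0] with w' hw'
  have hw'w : dist w' w < min (δ / 2) ε := mem_ball.1 hw'
  have hw'ε : w' ∈ ball w ε := mem_ball.2 (lt_of_lt_of_le hw'w (min_le_right _ _))
  have hkey := key w' hw'ε
  have habs : ‖w' - w‖ < min (δ / 2) ε := by rwa [← Complex.dist_eq]
  have hre' : |w'.re - w.re| ≤ ‖w' - w‖ := by
    simpa using Complex.abs_re_le_norm (w' - w)
  have him' : |w'.im - w.im| ≤ ‖w' - w‖ := by
    simpa using Complex.abs_im_le_norm (w' - w)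
  have memT : ∀ t ∈ [[w.re, w'.re]], ((t:ℂ) + (w'.im:ℂ) * I) ∈ ball a d := by
    intro t ht
    refine memB t w'.im ?_ ?_
    · have := abs_sub_left_of_mem_uIcc ht
      have h2 := min_le_right (δ / 2) ε
      linarith
    · have h2 := min_le_right (δ / 2) ε
      calc |w'.im - a.im| ≤ |w'.im - w.im| + |w.im - a.im| := abs_sub_le _ _ _
        _ ≤ |w.im - a.im| + ε := by linarith
  have memV2 : ∀ t ∈ [[w.im, w'.im]], ((w.re:ℂ) + (t:ℂ) * I) ∈ ball a d := by
    intro t ht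
    refine memB w.re t (by simp [hε.le]) ?_
    have h1 := abs_sub_left_of_mem_uIcc ht
    have h2 := min_le_right (δ / 2) ε
    calc |t - a.im| ≤ |t - w.im| + |w.im - a.im| := abs_sub_le _ _ _
      _ ≤ |w.im - a.im| + ε := by linarith
  have i5 : IntervalIntegrable (fun t : ℝ => h ((t:ℂ) + (w'.im:ℂ) * I))
      MeasureTheory.volume w.re w'.re := intH _ _ _ memT
  have i6 : IntervalIntegrable (fun t : ℝ => h ((w.re:ℂ) + (t:ℂ) * I))
      MeasureTheory.volume w.im w'.im := intV _ _ _ memV2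
  have decomp : F w' - F w - (w' - w) • h w =
      (∫ t in w.re..w'.re, (h ((t:ℂ) + (w'.im:ℂ) * I) - h w)) +
        I • ∫ t in w.im..w'.im, (h ((w.re:ℂ) + (t:ℂ) * I) - h w) := by
    rw [intervalIntegral.integral_sub i5 intervalIntegrable_const,
      intervalIntegral.integral_sub i6 intervalIntegrable_const,
      intervalIntegral.integral_const, intervalIntegral.integral_const]
    have hww : (w' - w : ℂ) = ((w'.re - w.re : ℝ) : ℂ) + ((w'.im - w.im : ℝ) : ℂ) * I := by
      simp [Complex.ext_iff]
    rw [hkey, hww]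
    simp only [smul_eq_mul, Complex.real_smul]
    push_cast
    ring
  rw [decomp]
  have bound1 : ‖∫ t in w.re..w'.re, (h ((t:ℂ) + (w'.im:ℂ) * I) - h w)‖ ≤
      (c / 2) * |w'.re - w.re| := by
    apply intervalIntegral.norm_integral_le_of_norm_le_const
    intro t ht
    have ht' : t ∈ [[w.re, w'.re]] := Set.uIoc_subset_uIcc ht
    have hdist : dist ((t:ℂ) + (w'.im:ℂ) * I) w < δ := by
      rw [Complex.dist_eq]
      have h1 : ‖(t:ℂ) + (w'.im:ℂ) * I - w‖ ≤
          |((t:ℂ) + (w'.im:ℂ) * I - w).re| + |((t:ℂ) + (w'.im:ℂ) * I - w).im| :=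
        Complex.norm_le_abs_re_add_abs_im _
      have h2 : (((t:ℂ) + (w'.im:ℂ) * I - w)).re = t - w.re := by simp
      have h3 : (((t:ℂ) + (w'.im:ℂ) * I - w)).im = w'.im - w.im := by simp
      rw [h2, h3] at h1
      have h4 := abs_sub_left_of_mem_uIcc ht'
      have h5 := min_le_left (δ / 2) ε
      calc ‖(t:ℂ) + (w'.im:ℂ) * I - w‖ ≤ |t - w.re| + |w'.im - w.im| := h1
        _ < δ := by linarith
    have := hδ hdist
    rw [dist_eq_norm] at this
    exact this.le
  have bound2 : ‖∫ t in w.im..w'.im, (h ((w.re:ℂ) + (t:ℂ) * I) - h w)‖ ≤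
      (c / 2) * |w'.im - w.im| := by
    apply intervalIntegral.norm_integral_le_of_norm_le_const
    intro t ht
    have ht' : t ∈ [[w.im, w'.im]] := Set.uIoc_subset_uIcc ht
    have hdist : dist ((w.re:ℂ) + (t:ℂ) * I) w < δ := by
      rw [Complex.dist_eq]
      have h1 : ‖(w.re:ℂ) + (t:ℂ) * I - w‖ ≤
          |((w.re:ℂ) + (t:ℂ) * I - w).re| + |((w.re:ℂ) + (t:ℂ) * I - w).im| :=
        Complex.norm_le_abs_re_add_abs_im _
      have h2 : (((w.re:ℂ) + (t:ℂ) * I - w)).re = 0 := by simp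
      have h3 : (((w.re:ℂ) + (t:ℂ) * I - w)).im = t - w.im := by simp
      rw [h2, h3] at h1
      have h4 := abs_sub_left_of_mem_uIcc ht'
      have h5 := min_le_left (δ / 2) ε
      calc ‖(w.re:ℂ) + (t:ℂ) * I - w‖ ≤ |(0:ℝ)| + |t - w.im| := h1
        _ < δ := by simp only [abs_zero, zero_add]; linarith
    have := hδ hdist
    rw [dist_eq_norm] at this
    exact this.le
  have hnorm : ‖w' - w‖ = ‖w' - w‖ := rfl
  calc ‖(∫ t in w.re..w'.re, (h ((t:ℂ) + (w'.im:ℂ) * I) - h w)) +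
        I • ∫ t in w.im..w'.im, (h ((w.re:ℂ) + (t:ℂ) * I) - h w)‖
      ≤ ‖∫ t in w.re..w'.re, (h ((t:ℂ) + (w'.im:ℂ) * I) - h w)‖ +
        ‖I • ∫ t in w.im..w'.im, (h ((w.re:ℂ) + (t:ℂ) * I) - h w)‖ := norm_add_le _ _
    _ = ‖∫ t in w.re..w'.re, (h ((t:ℂ) + (w'.im:ℂ) * I) - h w)‖ +
        ‖∫ t in w.im..w'.im, (h ((w.re:ℂ) + (t:ℂ) * I) - h w)‖ := by
        rw [norm_smul]; simp
    _ ≤ (c / 2) * |w'.re - w.re| + (c / 2) * |w'.im - w.im| := add_le_add bound1 bound2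
    _ ≤ c * ‖w' - w‖ := by
        rw [hnorm]
        have := norm_nonneg (w' - w)
        nlinarith


noncomputable def phiCR : (ℂ →L[ℝ] ℝ) →L[ℝ] ℂ :=
  Complex.ofRealCLM.comp (ContinuousLinearMap.apply ℝ ℝ (1 : ℂ)) -
    I • Complex.ofRealCLM.comp (ContinuousLinearMap.apply ℝ ℝ (I : ℂ))

lemma phiCR_apply (L : ℂ →L[ℝ] ℝ) : phiCR L = ((L 1 : ℝ) : ℂ) - I * ((L I : ℝ) : ℂ) := by
  simp [phiCR, smul_eq_mul]

lemma real_clm_eq_clm {M : Type*} [NormedAddCommGroup M] [NormedSpace ℝ M]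
    (E E' : ℂ →L[ℝ] M) (h1 : E 1 = E' 1) (hI : E I = E' I) : E = E' := by
  ext v
  have hv : v = (v.re : ℝ) • (1 : ℂ) + (v.im : ℝ) • (I : ℂ) := by
    simp [Complex.real_smul, Complex.re_add_im]
  rw [hv, map_add, map_add, map_smul, map_smul, map_smul, map_smul, h1, hI]

lemma cr_differentiableOn {u : ℂ → ℝ} {a : ℂ} {d : ℝ}
    (hu : IsHarmonicOn u (Metric.ball a d)) :
    DifferentiableOn ℂ (fun ζ => phiCR (fderiv ℝ u ζ)) (Metric.ball a d) := by
  intro ζ hζ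
  have hC : ContDiffAt ℝ 2 u ζ := (hu ζ hζ).1
  have hdf : DifferentiableAt ℝ (fderiv ℝ u) ζ :=
    (hC.fderiv_right (m := 1) (by norm_num)).differentiableAt (by norm_num)
  have hA : HasFDerivAt (fderiv ℝ u) (fderiv ℝ (fderiv ℝ u) ζ) ζ := hdf.hasFDerivAt
  set A := fderiv ℝ (fderiv ℝ u) ζ with hAdef
  have hD : HasFDerivAt (fun ζ => phiCR (fderiv ℝ u ζ)) (phiCR.comp A) ζ :=
    phiCR.hasFDerivAt.comp ζ hA
  have hsym : A I 1 = A 1 I := (hC.isSymmSndFDerivAt (by norm_num)).eq I 1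
  have hlap : A 1 1 + A I I = 0 := by
    have h2 := (hu ζ hζ).2
    rw [iteratedFDeriv_two_apply, iteratedFDeriv_two_apply] at h2
    simpa using h2
  have hCR : (phiCR.comp A) I = I * (phiCR.comp A) 1 := by
    simp only [ContinuousLinearMap.comp_apply, phiCR_apply]
    apply Complex.ext
    · simp [hsym]
    · simp only [Complex.sub_im, Complex.ofReal_im, Complex.mul_im, Complex.I_re, Complex.I_im,
        Complex.mul_re, Complex.sub_re, Complex.ofReal_re]
      ring_nf
      linarith [hlap]
  refine DifferentiableAt.differentiableWithinAt ?_
  refine ⟨((phiCR.comp A) 1) • (1 : ℂ →L[ℂ] ℂ), hasFDerivAt_of_restrictScalars ℝ hD ?_⟩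
  apply real_clm_eq_clm
  · simp [hCR]
  · simp [hCR]; ring


lemma harnack_core {x c m r : ℝ} (hx : 0 < x) (hc : 0 < c) (hr0 : 0 ≤ r) (hr1 : r < 1)
    (K : (x - c) ^ 2 + m ^ 2 ≤ r ^ 2 * ((x + c) ^ 2 + m ^ 2)) :
    c * (1 - r) / (1 + r) ≤ x ∧ x ≤ c * (1 + r) / (1 - r) := by
  have hPQ : (x*(1+r) - c*(1-r)) * (x*(1-r) - c*(1+r)) ≤ -((1-r^2)*m^2) := by nlinarith [K]
  constructor
  · rw [div_le_iff₀ (by linarith : (0:ℝ) < 1 + r)]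
    by_contra hcon
    push_neg at hcon
    have hP : x*(1+r) - c*(1-r) < 0 := by linarith
    have hQ : x*(1-r) - c*(1+r) < 0 := by nlinarith
    have hm := mul_pos_of_neg_of_neg hP hQ
    nlinarith [hm, hPQ, mul_nonneg (by nlinarith : (0:ℝ) ≤ 1 - r^2) (sq_nonneg m)]
  · rw [le_div_iff₀ (by linarith : (0:ℝ) < 1 - r)]
    by_contra hcon
    push_neg at hcon
    have hQ : x*(1-r) - c*(1+r) > 0 := by linarith
    have hP : x*(1+r) - c*(1-r) > 0 := by nlinarith
    have hm := mul_pos hP hQ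
    nlinarith [hm, hPQ, mul_nonneg (by nlinarith : (0:ℝ) ≤ 1 - r^2) (sq_nonneg m)]

/-- Harnack's inequality on a disc: if `u` is positive harmonic on `B(a,d)` and
`|z - a| = r d` with `0 ≤ r < 1`, then
`u(a)(1-r)/(1+r) ≤ u(z) ≤ u(a)(1+r)/(1-r)`. -/
theorem harnack_inequality_disc
    (u : ℂ → ℝ) (a : ℂ) (d : ℝ) (hd : 0 < d)
    (hu : IsHarmonicOn u (Metric.ball a d))
    (hpos : ∀ z ∈ Metric.ball a d, 0 < u z)
    (r : ℝ) (hr0 : 0 ≤ r) (hr1 : r < 1)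
    (z : ℂ) (hz : dist z a = r * d) :
    u a * (1 - r) / (1 + r) ≤ u z ∧ u z ≤ u a * (1 + r) / (1 - r) := by
  have haball : a ∈ ball a d := mem_ball_self hd
  have hzball : z ∈ ball a d := by rw [mem_ball, hz]; nlinarith
  -- the holomorphic derivative candidate
  have holo := cr_differentiableOn hu
  obtain ⟨F, hF⟩ := exists_primitive hd holo
  -- Re F - u has zero derivative on the ball
  have hq : ∀ ζ ∈ ball a d, HasFDerivAt (fun ζ => (F ζ).re - u ζ) (0 : ℂ →L[ℝ] ℝ) ζ := by
    intro ζ hζ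
    have h2 : HasFDerivAt (fun ζ => (F ζ).re)
        (Complex.reCLM.comp ((ContinuousLinearMap.smulRight (1 : ℂ →L[ℂ] ℂ)
          (phiCR (fderiv ℝ u ζ))).restrictScalars ℝ)) ζ :=
      Complex.reCLM.hasFDerivAt.comp ζ (((hF ζ hζ).hasFDerivAt).restrictScalars ℝ)
    have h3 : HasFDerivAt u (fderiv ℝ u ζ) ζ :=
      ((hu ζ hζ).1.differentiableAt (by norm_num)).hasFDerivAt
    have h4 := h2.sub h3
    have hE : Complex.reCLM.comp ((ContinuousLinearMap.smulRight (1 : ℂ →L[ℂ] ℂ)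
          (phiCR (fderiv ℝ u ζ))).restrictScalars ℝ) - fderiv ℝ u ζ = 0 := by
      apply real_clm_eq_clm <;> simp [phiCR_apply]
    rwa [hE] at h4
  have hconst : ∀ ζ ∈ ball a d, (F ζ).re - u ζ = (F a).re - u a := by
    intro ζ hζ
    have hdq : DifferentiableOn ℝ (fun ζ => (F ζ).re - u ζ) (ball a d) :=
      fun x hx => (hq x hx).differentiableAt.differentiableWithinAt
    have hbound : ∀ x ∈ ball a d,
        ‖fderivWithin ℝ (fun ζ => (F ζ).re - u ζ) (ball a d) x‖ ≤ 0 := by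
      intro x hx
      rw [fderivWithin_of_isOpen isOpen_ball hx, (hq x hx).fderiv]
      simp
    have h1 := (convex_ball a d).norm_image_sub_le_of_norm_fderivWithin_le hdq hbound hζ haball
    simp only [zero_mul, norm_le_zero_iff, sub_eq_zero] at h1
    linarith [h1.le, h1.ge]
  set G : ℂ → ℂ := fun ζ => F ζ - F a + (u a : ℂ) with hGdef
  have hGre : ∀ ζ ∈ ball a d, (G ζ).re = u ζ := by
    intro ζ hζ
    have h1 := hconst ζ hζ
    simp only [hGdef, Complex.add_re, Complex.sub_re, Complex.ofReal_re]
    linarith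
  have hGdiff : DifferentiableOn ℂ G (ball a d) := by
    intro ζ hζ
    exact (((hF ζ hζ).differentiableAt.sub_const (F a)).add_const _).differentiableWithinAt
  have hc : 0 < u a := hpos a haball
  have hne : ∀ ζ ∈ ball a d, G ζ + (u a : ℂ) ≠ 0 := by
    intro ζ hζ hcontra
    have h0 : (G ζ + (u a : ℂ)).re = 0 := by rw [hcontra]; simp
    rw [Complex.add_re, hGre ζ hζ, Complex.ofReal_re] at h0
    linarith [hpos ζ hζ]
  set g : ℂ → ℂ := fun ζ => (G ζ - (u a : ℂ)) / (G ζ + (u a : ℂ)) with hgdef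
  have hgdiff : DifferentiableOn ℂ g (ball a d) :=
    DifferentiableOn.div (hGdiff.sub_const _) (hGdiff.add_const _) hne
  have hga : g a = 0 := by
    simp only [hgdef, hGdef]
    simp
  have hmaps : MapsTo g (ball a d) (ball (g a) 1) := by
    rw [hga]
    intro ζ hζ
    rw [mem_ball, dist_zero_right]
    have hd0 : 0 < ‖G ζ + (u a : ℂ)‖ := norm_pos_iff.2 (hne ζ hζ)
    simp only [hgdef, norm_div]
    rw [div_lt_one hd0]
    have hlt : Complex.normSq (G ζ - (u a : ℂ)) < Complex.normSq (G ζ + (u a : ℂ)) := by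
      simp only [Complex.normSq_apply, Complex.sub_re, Complex.add_re, Complex.sub_im,
        Complex.add_im, Complex.ofReal_re, Complex.ofReal_im, hGre ζ hζ]
      nlinarith [hpos ζ hζ, hc]
    rw [Complex.norm_def, Complex.norm_def]
    exact Real.sqrt_lt_sqrt (Complex.normSq_nonneg _) hlt
  have hschwarz := Complex.dist_le_div_mul_dist_of_mapsTo_ball hgdiff (hmaps.mono_right ball_subset_closedBall) hzball
  rw [hga, dist_zero_right, hz] at hschwarz
  have hgz : ‖g z‖ ≤ r := by
    have he : (1:ℝ) / d * (r * d) = r := by field_simp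
    calc ‖g z‖ = ‖g z‖ := rfl
      _ ≤ 1 / d * (r * d) := hschwarz
      _ = r := he
  have hd0z : 0 < ‖G z + (u a : ℂ)‖ := norm_pos_iff.2 (hne z hzball)
  have habs2 : ‖G z - (u a : ℂ)‖ ≤ r * ‖G z + (u a : ℂ)‖ := by
    have h1 : ‖g z‖ =
        ‖G z - (u a : ℂ)‖ / ‖G z + (u a : ℂ)‖ := by
      rw [hgdef]; exact norm_div _ _
    rw [h1, div_le_iff₀ hd0z] at hgz
    exact hgz
  have K : ((G z).re - u a) ^ 2 + (G z).im ^ 2 ≤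
      r ^ 2 * (((G z).re + u a) ^ 2 + (G z).im ^ 2) := by
    have h2 : ‖G z - (u a : ℂ)‖ ^ 2 ≤
        (r * ‖G z + (u a : ℂ)‖) ^ 2 :=
      pow_le_pow_left₀ (norm_nonneg _) habs2 2
    rw [mul_pow, Complex.sq_norm, Complex.sq_norm] at h2
    simp only [Complex.normSq_apply, Complex.sub_re, Complex.add_re, Complex.sub_im,
      Complex.add_im, Complex.ofReal_re, Complex.ofReal_im] at h2
    nlinarith [h2]
  rw [hGre z hzball] at K
  have hx : 0 < u z := hpos z hzball
  have hres := harnack_core hx hc hr0 hr1 K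
  exact ⟨hres.1, hres.2⟩
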